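/- arXiv:2106.11225 — 5 statements merged into one kernel-verified Lean document; each statement's English description precedes it below -/
import Mathlib

section
/- Let V be a unitarizable highest weight representation of the Virasoro algebra with highest weight λ and highest weight vector v (so L_k.v = 0 for k ≥ 1, L_0.v = λ(L_0)v, c.v = λ(c)v, and the Hermitian form satisfies ⟨L_k w | w'⟩ = ⟨w | L_{-k} w'⟩ and is positive definite). Then both λ(L_0) ≥ 0 and λ(c) ≥ 0. -/
/-- A unitarizable representation of the Virasoro algebra on a complex inner product
space `V` (the positive-definite Hermitian form is the inner product): operators
`L k` (`k ∈ ℤ`) and a central operator `C` satisfying the Virasoro commutation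
relations `[L k, L j] = (k - j) L (k+j) + (1/12)(k³ - k) δ_{k,-j} C`, with the
adjunction properties `⟨L k w, w'⟩ = ⟨w, L (-k) w'⟩` and `⟨C w, w'⟩ = ⟨w, C w'⟩`. -/
structure VirasoroRep (V : Type) [NormedAddCommGroup V] [InnerProductSpace ℂ V] where
  L : ℤ → V →ₗ[ℂ] V
  C : V →ₗ[ℂ] V
  comm : ∀ k j : ℤ, (L k).comp (L j) - (L j).comp (L k)
      = ((k : ℂ) - (j : ℂ)) • L (k + j)
        + (if k + j = 0 then (((k : ℂ) ^ 3 - (k : ℂ)) / 12) else 0) • C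
  central : ∀ k : ℤ, (L k).comp C = C.comp (L k)
  unitary : ∀ (k : ℤ) (w w' : V), (inner ℂ (L k w) w' : ℂ) = inner ℂ w (L (-k) w')
  unitaryC : ∀ w w' : V, (inner ℂ (C w) w' : ℂ) = inner ℂ w (C w')

lemma virasoro_key
    {V : Type} [NormedAddCommGroup V] [InnerProductSpace ℂ V]
    (ρ : VirasoroRep V) (v : V) (hv : v ≠ 0) (lam0 lamc : ℂ)
    (hann : ∀ k : ℤ, 1 ≤ k → ρ.L k v = 0)
    (h0 : ρ.L 0 v = lam0 • v) (hc : ρ.C v = lamc • v) (n : ℤ) (hn : 1 ≤ n) :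
    0 ≤ (2 * (n:ℂ) * lam0 + (((n:ℂ)^3 - (n:ℂ))/12) * lamc).re ∧
      (2 * (n:ℂ) * lam0 + (((n:ℂ)^3 - (n:ℂ))/12) * lamc).im = 0 := by
  set μ : ℂ := 2 * (n:ℂ) * lam0 + (((n:ℂ)^3 - (n:ℂ))/12) * lamc with hμ
  have hcomm := ρ.comm n (-n)
  have happ : ρ.L n (ρ.L (-n) v) = μ • v := by
    have := congrArg (fun (T : V →ₗ[ℂ] V) => T v) hcomm
    simp only [LinearMap.sub_apply, LinearMap.comp_apply, LinearMap.add_apply,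
      LinearMap.smul_apply, add_neg_cancel, if_pos rfl] at this
    rw [hann n hn] at this
    simp only [map_zero, sub_zero, h0, hc] at this
    rw [this, hμ, smul_smul, smul_smul, ← add_smul]
    congr 1
    push_cast
    ring
  have hinner : (inner ℂ (ρ.L (-n) v) (ρ.L (-n) v) : ℂ) = μ * (((‖v‖^2 : ℝ)) : ℂ) := by
    have h1 := ρ.unitary (-n) v (ρ.L (-n) v)
    rw [neg_neg, happ, inner_smul_right] at h1
    rw [h1, inner_self_eq_norm_sq_to_K]
    norm_cast
  have hnn : (0:ℝ) ≤ μ.re * (‖v‖^2) ∧ μ.im * (‖v‖^2) = 0 := by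
    have h1 : ((‖ρ.L (-n) v‖^2 : ℝ) : ℂ) = μ * (((‖v‖^2 : ℝ)) : ℂ) := by
      rw [← hinner, inner_self_eq_norm_sq_to_K]
      norm_cast
    constructor
    · have h2 := congrArg Complex.re h1
      simp only [Complex.mul_re, Complex.ofReal_re, Complex.ofReal_im, mul_zero,
        sub_zero] at h2
      rw [← h2]
      positivity
    · have h2 := congrArg Complex.im h1
      simp only [Complex.mul_im, Complex.ofReal_re, Complex.ofReal_im, mul_zero,
        zero_add] at h2
      linarith
  have hvpos : (0:ℝ) < ‖v‖^2 := by
    have : 0 < ‖v‖ := norm_pos_iff.mpr hv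
    positivity
  constructor
  · nlinarith [hnn.1]
  · have := hnn.2
    exact by nlinarith [this]

/-- If `v` is a highest weight vector of a unitarizable highest weight
representation of the Virasoro algebra, with `L 0 v = λ(L_0) v` and `C v = λ(c) v`,
then both `λ(L_0) ≥ 0` and `λ(c) ≥ 0` (they are nonnegative real numbers). -/
theorem virasoro_unitarizable_hw_nonneg
    {V : Type} [NormedAddCommGroup V] [InnerProductSpace ℂ V]
    (ρ : VirasoroRep V) (v : V) (hv : v ≠ 0) (lam0 lamc : ℂ)
    (hann : ∀ k : ℤ, 1 ≤ k → ρ.L k v = 0)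
    (h0 : ρ.L 0 v = lam0 • v) (hc : ρ.C v = lamc • v) :
    (0 ≤ lam0.re ∧ lam0.im = 0) ∧ (0 ≤ lamc.re ∧ lamc.im = 0) := by
  have keyR : ∀ n : ℤ, 1 ≤ n →
      (0 ≤ 2*(n:ℝ)*lam0.re + (((n:ℝ)^3 - (n:ℝ))/12)*lamc.re ∧
       2*(n:ℝ)*lam0.im + (((n:ℝ)^3 - (n:ℝ))/12)*lamc.im = 0) := by
    intro n hn
    obtain ⟨h1, h2⟩ := virasoro_key ρ v hv lam0 lamc hann h0 hc n hn
    have hcast : 2 * (n:ℂ) * lam0 + (((n:ℂ)^3 - (n:ℂ))/12) * lamc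
        = ((2*(n:ℝ) : ℝ) : ℂ) * lam0 + (((((n:ℝ)^3 - (n:ℝ))/12 : ℝ)) : ℂ) * lamc := by
      push_cast; ring
    rw [hcast] at h1 h2
    simp only [Complex.add_re, Complex.add_im, Complex.re_ofReal_mul,
      Complex.im_ofReal_mul] at h1 h2
    exact ⟨h1, h2⟩
  obtain ⟨k1re, k1im⟩ := keyR 1 le_rfl
  obtain ⟨k2re, k2im⟩ := keyR 2 one_le_two
  norm_num at k1re k1im k2re k2im
  have hlam0re : 0 ≤ lam0.re := by linarith
  have hlam0im : lam0.im = 0 := k1im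
  have hlamcim : lamc.im = 0 := by
    rw [hlam0im] at k2im; linarith
  refine ⟨⟨hlam0re, hlam0im⟩, ?_, hlamcim⟩
  by_contra hb
  push_neg at hb
  set a := lam0.re
  set b := lamc.re
  have hbneg : b < 0 := hb
  obtain ⟨m, hm⟩ := exists_nat_gt (24 * a / (-b))
  have hbpos : (0:ℝ) < -b := by linarith
  have hm' : 24 * a < (m:ℝ) * (-b) := (div_lt_iff₀ hbpos).mp hm
  set nz : ℤ := (m : ℤ) + 2 with hnz
  have hn1 : (1:ℤ) ≤ nz := by omega
  obtain ⟨kre, _⟩ := keyR nz hn1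
  have hnr : ((nz:ℤ) : ℝ) = (m:ℝ) + 2 := by push_cast [hnz]; ring
  rw [hnr] at kre
  set nr : ℝ := (m:ℝ) + 2 with hnrdef
  have hnr2 : (2:ℝ) ≤ nr := by
    have : (0:ℝ) ≤ (m:ℝ) := Nat.cast_nonneg m
    linarith
  have hcube : nr^3 - nr ≥ nr^2 := by nlinarith
  have hstep : (nr^3 - nr) * b ≤ nr^2 * b := by nlinarith
  have hnb : nr * (-b) > 24 * a := by
    have : (m:ℝ) * (-b) ≤ nr * (-b) := by nlinarith
    linarith
  have hnrpos : (0:ℝ) < nr := by linarith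
  have h4 : nr * (24 * a) < nr * (nr * -b) := mul_lt_mul_of_pos_left hnb hnrpos
  clear_value nr nz a b
  linarith [kre, hstep, h4]
end

section
/- Let V be an irreducible unitarizable highest weight representation of the Virasoro algebra with highest weight λ and highest weight vector v. (1) If λ(L_0) ≠ 0 then L_{−k}·v ≠ 0 for every k ≥ 1. (2) If λ(L_0) = 0 and λ(c) ≠ 0 then L_{−1}·v = 0 but L_{−k}·v ≠ 0 for all k ≥ 2. (3) If λ(L_0) = λ(c) = 0 then V is one-dimensional. -/
/-- Let `V` be an irreducible unitarizable highest weight representation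
of the Virasoro algebra with highest weight `λ` (so `L 0 v = λ(L_0) v`, `C v = λ(c) v`,
`L k v = 0` for `k ≥ 1`, and the only invariant subspaces are `⊥` and `⊤`).
(1) If `λ(L_0) ≠ 0` then `L (-k) v ≠ 0` for every `k ≥ 1`.
(2) If `λ(L_0) = 0` and `λ(c) ≠ 0` then `L (-1) v = 0` but `L (-k) v ≠ 0` for all `k ≥ 2`.
(3) If `λ(L_0) = λ(c) = 0` then `V` is one-dimensional. -/
theorem virasoro_irreducible_hw_structure
    {V : Type} [NormedAddCommGroup V] [InnerProductSpace ℂ V]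
    (ρ : VirasoroRep V) (v : V) (hv : v ≠ 0) (lam0 lamc : ℂ)
    (hann : ∀ k : ℤ, 1 ≤ k → ρ.L k v = 0)
    (h0 : ρ.L 0 v = lam0 • v) (hc : ρ.C v = lamc • v)
    (hirr : ∀ p : Submodule ℂ V,
      (∀ (k : ℤ), ∀ x ∈ p, ρ.L k x ∈ p) → (∀ x ∈ p, ρ.C x ∈ p) → p = ⊥ ∨ p = ⊤) :
    (lam0 ≠ 0 → ∀ k : ℤ, 1 ≤ k → ρ.L (-k) v ≠ 0) ∧
    (lam0 = 0 → lamc ≠ 0 → ρ.L (-1) v = 0 ∧ ∀ k : ℤ, 2 ≤ k → ρ.L (-k) v ≠ 0) ∧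
    (lam0 = 0 → lamc = 0 → Module.finrank ℂ V = 1) := by
  have hvn : ‖v‖ ≠ 0 := norm_ne_zero_iff.mpr hv
  -- key identity
  have key : ∀ k : ℤ, 1 ≤ k → (inner ℂ (ρ.L (-k) v) (ρ.L (-k) v) : ℂ)
      = (2*(k:ℂ)*lam0 + ((k:ℂ)^3-(k:ℂ))/12*lamc) * inner ℂ v v := by
    intro k hk
    have hu := ρ.unitary (-k) v (ρ.L (-k) v)
    rw [neg_neg] at hu
    have hcomm := congrArg (fun f : V →ₗ[ℂ] V => f v) (ρ.comm k (-k))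
    simp only [LinearMap.sub_apply, LinearMap.comp_apply, LinearMap.add_apply,
      LinearMap.smul_apply, add_neg_cancel, if_pos rfl, sub_neg_eq_add, h0, hc,
      hann k hk, map_zero, sub_zero] at hcomm
    rw [hu, hcomm]
    rw [inner_add_right, inner_smul_right, inner_smul_right, inner_smul_right, inner_smul_right]
    simp only [if_true, Int.cast_neg]
    ring
  -- real form of the coefficients
  have hb : ∀ k : ℤ, 1 ≤ k → ∃ r : ℝ, 0 ≤ r ∧
      (2*(k:ℂ)*lam0 + ((k:ℂ)^3-(k:ℂ))/12*lamc) = (r:ℂ) ∧ (ρ.L (-k) v = 0 ↔ r = 0) := by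
    intro k hk
    refine ⟨‖ρ.L (-k) v‖^2 / ‖v‖^2, by positivity, ?_, ?_⟩
    · have h2 := key k hk
      rw [inner_self_eq_norm_sq_to_K, inner_self_eq_norm_sq_to_K] at h2
      have hvc : ((‖v‖:ℂ))^2 ≠ 0 := by
        simpa using hvn
      have hcast : ((‖ρ.L (-k) v‖^2/‖v‖^2 : ℝ):ℂ) = (‖ρ.L (-k) v‖:ℂ)^2 / (‖v‖:ℂ)^2 := by
        push_cast; ring
      rw [hcast, eq_div_iff hvc]; exact h2.symm
    · constructor
      · intro h; rw [h]; simp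
      · intro h
        have h2 : ‖ρ.L (-k) v‖^2 = 0 :=
          (div_eq_zero_iff.mp h).resolve_right (pow_ne_zero 2 hvn)
        have h3 := pow_eq_zero_iff (two_ne_zero) |>.mp h2
        exact norm_eq_zero.mp h3
  -- lam0 and lamc are real
  obtain ⟨r1, hr1, he1, hz1⟩ := hb 1 le_rfl
  obtain ⟨r2, hr2, he2, hz2⟩ := hb 2 one_le_two
  have hlam0 : lam0 = ((r1/2 : ℝ) : ℂ) := by
    push_cast
    push_cast at he1
    linear_combination he1 / 2
  have hlamc : lamc = ((2*r2 - 4*r1 : ℝ) : ℂ) := by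
    push_cast
    push_cast at he1 he2
    linear_combination 2 * he2 - 4 * he1
  set l0 : ℝ := r1/2 with hl0def
  set c : ℝ := 2*r2 - 4*r1 with hcdef
  -- real energy function
  have hE : ∀ k : ℤ, 1 ≤ k →
      0 ≤ 2*(k:ℝ)*l0 + ((k:ℝ)^3-(k:ℝ))/12*c ∧
      (ρ.L (-k) v = 0 ↔ 2*(k:ℝ)*l0 + ((k:ℝ)^3-(k:ℝ))/12*c = 0) := by
    intro k hk
    obtain ⟨r, hr, he, hz⟩ := hb k hk
    have : ((2*(k:ℝ)*l0 + ((k:ℝ)^3-(k:ℝ))/12*c : ℝ) : ℂ) = (r : ℂ) := by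
      rw [← he, hlam0, hlamc]; push_cast; ring
    have hrE : 2*(k:ℝ)*l0 + ((k:ℝ)^3-(k:ℝ))/12*c = r := by exact_mod_cast this
    rw [hrE]; exact ⟨hr.trans_eq rfl |>.trans_eq rfl, hz⟩
  refine ⟨?_, ?_, ?_⟩
  · -- part 1
    intro hl k hk hLk
    have hl0 : l0 ≠ 0 := by
      intro h; apply hl; rw [hlam0, h]; simp
    have h1 := (hE 1 le_rfl).1
    have hl0pos : 0 < l0 := by
      rcases lt_or_eq_of_le (by norm_num at h1 ⊢; linarith : (0:ℝ) ≤ l0) with h | h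
      · exact h
      · exact absurd h.symm hl0
    have hzero := (hE k hk).2.mp hLk
    have hx1 : (1:ℝ) ≤ (k:ℝ) := by exact_mod_cast hk
    by_cases hk1 : k = 1
    · subst hk1; norm_num at hzero; linarith
    · have hk2 : 2 ≤ k := by omega
      have hx2 : (2:ℝ) ≤ (k:ℝ) := by exact_mod_cast hk2
      have hnext := (hE (k+1) (by omega)).1
      push_cast at hnext
      set x : ℝ := (k:ℝ)
      have hpos : 0 < x^3 - x := by nlinarith
      nlinarith [mul_nonneg hnext (le_of_lt hpos), mul_pos hl0pos hpos,
        mul_pos (mul_pos hl0pos hpos) (by linarith : (0:ℝ) < x)]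
  · -- part 2
    intro hl0' hlc
    have hl0z : l0 = 0 := by
      have : ((l0:ℝ):ℂ) = 0 := by rw [← hlam0, hl0']
      exact_mod_cast this
    have hcpos : 0 < c := by
      have h2 := (hE 2 one_le_two).1
      rw [hl0z] at h2
      norm_num at h2
      rcases lt_or_eq_of_le h2 with h | h
      · exact h
      · exfalso; apply hlc; rw [hlamc, ← h]; simp
    constructor
    · apply (hE 1 le_rfl).2.mpr
      rw [hl0z]; norm_num
    · intro k hk hLk
      have hzero := (hE k (by omega)).2.mp hLk
      rw [hl0z] at hzero
      have hx2 : (2:ℝ) ≤ (k:ℝ) := by exact_mod_cast hk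
      have hpos : (0:ℝ) < (k:ℝ)^3-(k:ℝ) := by
        nlinarith [mul_pos (mul_pos (show (0:ℝ)<(k:ℝ) by linarith) (show (0:ℝ)<(k:ℝ)-1 by linarith)) (show (0:ℝ)<(k:ℝ)+1 by linarith)]
      nlinarith [mul_pos hpos hcpos]
  · -- part 3
    intro hl0' hlc'
    have hl0z : l0 = 0 := by
      have : ((l0:ℝ):ℂ) = 0 := by rw [← hlam0, hl0']
      exact_mod_cast this
    have hcz : c = 0 := by
      have : ((c:ℝ):ℂ) = 0 := by rw [← hlamc, hlc']
      exact_mod_cast this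
    have hall : ∀ j : ℤ, ρ.L j v = 0 := by
      intro j
      rcases lt_trichotomy j 0 with h | h | h
      · have hk : 1 ≤ -j := by omega
        have h' : ρ.L (-(-j)) v = 0 := (hE (-j) hk).2.mpr (by rw [hl0z, hcz]; ring)
        simpa using h'
      · rw [h, h0, hl0', zero_smul]
      · exact hann j h
    have hCv : ρ.C v = 0 := by rw [hc, hlc', zero_smul]
    have hspan := hirr (ℂ ∙ v) ?_ ?_
    · rcases hspan with h | h
      · exfalso
        exact hv (by simpa using (Submodule.eq_bot_iff _).mp h v (Submodule.mem_span_singleton_self v))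
      · rw [← finrank_top ℂ V, ← h]
        exact finrank_span_singleton hv
    · intro k x hx
      obtain ⟨a, rfl⟩ := Submodule.mem_span_singleton.mp hx
      rw [map_smul, hall k]
      simp
    · intro x hx
      obtain ⟨a, rfl⟩ := Submodule.mem_span_singleton.mp hx
      rw [map_smul, hCv]
      simp
end

section
/- Let 𝔤 be an affine Kac–Moody algebra, and let β = γ + kδ be a real positive root (γ a root of the underlying finite root system, k ≥ 0). Suppose β − 2α_i is a root for some simple root α_i of 𝔤. Then for any j ≠ i, neither β − 2α_j nor β − 2α_j − α_i is a root or zero. -/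
/-- A finite reduced crystallographic (irreducible) root system in a rational vector
space `V`, given by a symmetric positive form `B` on the roots. -/
structure FinRootSystem (V : Type) [AddCommGroup V] [Module ℚ V] where
  B : V →ₗ[ℚ] V →ₗ[ℚ] ℚ
  symm : ∀ x y, B x y = B y x
  roots : Set V
  finite : roots.Finite
  zero_not_mem : (0 : V) ∉ roots
  pos : ∀ a ∈ roots, 0 < B a a
  neg_mem : ∀ a ∈ roots, -a ∈ roots
  reflect_mem : ∀ a ∈ roots, ∀ b ∈ roots, b - (2 * B b a / B a a) • a ∈ roots
  crys : ∀ a ∈ roots, ∀ b ∈ roots, ∃ n : ℤ, 2 * B b a / B a a = (n : ℚ)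
  reduced : ∀ a ∈ roots, ∀ c : ℚ, c • a ∈ roots → c = 1 ∨ c = -1
  irred : ¬ ∃ S T : Set V, S.Nonempty ∧ T.Nonempty ∧ S ∪ T = roots ∧
      ∀ a ∈ S, ∀ b ∈ T, B a b = 0

/-- A base (system of simple roots) of the finite root system, together with the
highest root `θ`. -/
structure RSBase {V : Type} [AddCommGroup V] [Module ℚ V]
    (R : FinRootSystem V) (ℓ : ℕ) where
  a : Fin ℓ → V
  mem : ∀ i, a i ∈ R.roots
  indep : LinearIndependent ℚ a
  decomp : ∀ γ ∈ R.roots, (∃ c : Fin ℓ → ℕ, γ = ∑ i, (c i : ℚ) • a i) ∨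
      (∃ c : Fin ℓ → ℕ, γ = -(∑ i, (c i : ℚ) • a i))
  θ : V
  θ_mem : θ ∈ R.roots
  θ_highest : ∀ γ ∈ R.roots, ∃ c : Fin ℓ → ℕ, θ - γ = ∑ i, (c i : ℚ) • a i

variable {V : Type} [AddCommGroup V] [Module ℚ V]

/-- The roots of the untwisted affine Kac–Moody algebra built from the finite root
system `R`: elements of `V × ℤ`, a pair `(γ, k)` representing `γ + kδ`; the real
roots are `{γ + kδ : γ ∈ Φ̊}` and the imaginary roots are `{kδ : k ≠ 0}`. -/
def affRoots (R : FinRootSystem V) : Set (V × ℤ) :=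
  {p | p.1 ∈ R.roots} ∪ {p | p.1 = 0 ∧ p.2 ≠ 0}

/-- The simple roots of the untwisted affine algebra: `α₀ = δ - θ = (-θ, 1)` and the
simple roots `(a i, 0)` of the finite system. -/
def affSimple (R : FinRootSystem V) {ℓ : ℕ} (Bs : RSBase R ℓ) :
    Fin (ℓ + 1) → V × ℤ :=
  Fin.cases (-Bs.θ, 1) (fun i => (Bs.a i, 0))

namespace Aux

variable {V : Type} [AddCommGroup V] [Module ℚ V] (R : FinRootSystem V)

lemma root_ne_zero {a : V} (ha : a ∈ R.roots) : a ≠ 0 :=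
  fun h => R.zero_not_mem (h ▸ ha)

lemma Bpos_ne {a : V} (ha : a ∈ R.roots) : R.B a a ≠ 0 := (R.pos a ha).ne'

lemma pairing_int {a b : V} (ha : a ∈ R.roots) (hb : b ∈ R.roots) :
    ∃ n : ℤ, 2 * R.B b a = (n : ℚ) * R.B a a := by
  obtain ⟨n, hn⟩ := R.crys a ha b hb
  exact ⟨n, by rw [div_eq_iff (Bpos_ne R ha)] at hn; exact hn⟩

lemma reflect_mem' {a b : V} (ha : a ∈ R.roots) (hb : b ∈ R.roots) (n : ℚ)
    (h : 2 * R.B b a = n * R.B a a) : b - n • a ∈ R.roots := by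
  have := R.reflect_mem a ha b hb
  rwa [show 2 * R.B b a / R.B a a = n by rw [div_eq_iff (Bpos_ne R ha), h]] at this

lemma dep_pm {a b : V} (ha : a ∈ R.roots) (hb : b ∈ R.roots)
    (h : ∃ c : ℚ, b = c • a) : b = a ∨ b = -a := by
  obtain ⟨c, rfl⟩ := h
  rcases R.reduced a ha c hb with h1 | h1 <;> subst h1 <;> simp

lemma indep_flip {a b : V} (ha : a ≠ 0) (h : ¬∃ c : ℚ, b = c • a) :
    ¬∃ c : ℚ, a = c • b := by
  rintro ⟨c, hc⟩
  rcases eq_or_ne c 0 with rfl | hc0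
  · exact ha (by simpa using hc)
  · exact h ⟨c⁻¹, by rw [hc, smul_smul, inv_mul_cancel₀ hc0, one_smul]⟩

lemma indep_neg {a b : V} (h : ¬∃ c : ℚ, b = c • a) : ¬∃ c : ℚ, -b = c • a := by
  rintro ⟨c, hc⟩
  exact h ⟨-c, by rw [neg_smul, ← hc, neg_neg]⟩

lemma paux {a b : V} (ha : a ∈ R.roots) (hb : b ∈ R.roots)
    (hind : ¬∃ c : ℚ, b = c • a) (p q : ℤ)
    (hp : 2 * R.B b a = (p : ℚ) * R.B a a) (hq : 2 * R.B a b = (q : ℚ) * R.B b b)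
    (hp1 : 1 ≤ p) (hq1 : 1 ≤ q) : p * q ≤ 3 := by
  by_contra hlt
  push_neg at hlt
  have h4 : (4 : ℚ) ≤ (p : ℚ) * q := by exact_mod_cast hlt
  have hp1' : (1 : ℚ) ≤ (p : ℚ) := by exact_mod_cast hp1
  obtain ⟨F, hF0, hFs⟩ : ∃ F : ℕ → ℚ × ℚ, F 0 = (0, 1) ∧ ∀ m, F (m + 1) =
      ((p : ℚ) * ((q : ℚ) * (F m).1 + (F m).2) - (F m).1,
        -((q : ℚ) * (F m).1 + (F m).2)) :=
    ⟨fun m => m.rec ((0 : ℚ), (1 : ℚ))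
      (fun _ gf => ((p : ℚ) * ((q : ℚ) * gf.1 + gf.2) - gf.1, -((q : ℚ) * gf.1 + gf.2))),
      rfl, fun m => rfl⟩
  have hmem : ∀ m, (F m).1 • a + (F m).2 • b ∈ R.roots := by
    intro m
    induction m with
    | zero => rw [hF0]; simpa using hb
    | succ m ih =>
      have e1 : 2 * R.B ((F m).1 • a + (F m).2 • b) b
          = ((q : ℚ) * (F m).1 + 2 * (F m).2) * R.B b b := by
        simp only [map_add, map_smul, LinearMap.add_apply, LinearMap.smul_apply,
          smul_eq_mul]
        have hs : R.B a b = R.B b a := R.symm a b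
        linear_combination (F m).1 * hq + 2 * (F m).1 * hs - 2 * (F m).1 * hs
      have hy := reflect_mem' R hb ih _ e1
      have hy2 : (F m).1 • a + (F m).2 • b - ((q : ℚ) * (F m).1 + 2 * (F m).2) • b
          = (F m).1 • a + (-((q : ℚ) * (F m).1 + (F m).2)) • b := by
        module
      rw [hy2] at hy
      have e2 : 2 * R.B ((F m).1 • a + (-((q : ℚ) * (F m).1 + (F m).2)) • b) a
          = (2 * (F m).1 + (-((q : ℚ) * (F m).1 + (F m).2)) * (p : ℚ)) * R.B a a := by
        simp only [map_add, map_smul, LinearMap.add_apply, LinearMap.smul_apply,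
          smul_eq_mul]
        linear_combination (-((q : ℚ) * (F m).1 + (F m).2)) * hp
      have hz := reflect_mem' R ha hy _ e2
      have hz2 : (F m).1 • a + (-((q : ℚ) * (F m).1 + (F m).2)) • b -
          (2 * (F m).1 + (-((q : ℚ) * (F m).1 + (F m).2)) * (p : ℚ)) • a
          = (F (m + 1)).1 • a + (F (m + 1)).2 • b := by
        rw [hFs]; module
      rwa [hz2] at hz
  have hq1' : (1 : ℚ) ≤ (q : ℚ) := by exact_mod_cast hq1
  have hmono : ∀ m, 0 ≤ (F m).1 ∧ (F m).1 < (F (m + 1)).1 := by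
    intro m
    induction m with
    | zero =>
      refine ⟨by rw [hF0], ?_⟩
      rw [hF0, hFs, hF0]
      simp only
      nlinarith
    | succ m ih =>
      obtain ⟨ih0, ih1⟩ := ih
      refine ⟨le_of_lt (lt_of_le_of_lt ih0 ih1), ?_⟩
      have e2 : (F (m + 2)).1 = ((p : ℚ) * q - 2) * (F (m + 1)).1 - (F m).1 := by
        rw [hFs (m + 1), hFs m]
        simp only
        ring
      rw [e2]
      nlinarith [lt_of_le_of_lt ih0 ih1]
  have hsm : StrictMono (fun m => (F m).1) := strictMono_nat_of_lt_succ (fun m => (hmono m).2)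
  have hinj : Function.Injective (fun m => (F m).1 • a + (F m).2 • b) := by
    intro m m' h
    by_contra hne
    simp only at h
    have hg : (F m).1 ≠ (F m').1 := fun h' => hne (hsm.injective h')
    have hco : ((F m).1 - (F m').1) • a = ((F m').2 - (F m).2) • b := by
      linear_combination (norm := module) h
    rcases eq_or_ne (F m').2 (F m).2 with he | he
    · rw [he, sub_self, zero_smul, smul_eq_zero] at hco
      rcases hco with h0 | h0
      · exact hg (by linarith [sub_eq_zero.mp (by linarith [h0] : (F m).1 - (F m').1 = 0)])
      · exact root_ne_zero R ha h0
    · refine hind ⟨((F m').2 - (F m).2)⁻¹ * ((F m).1 - (F m').1), ?_⟩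
      have hne2 : (F m').2 - (F m).2 ≠ 0 := sub_ne_zero.mpr he
      rw [mul_smul, hco, smul_smul, inv_mul_cancel₀ hne2, one_smul]
  have : R.roots.Infinite :=
    Set.infinite_of_injective_forall_mem hinj hmem
  exact this R.finite

end Aux
namespace Aux

variable {V : Type} [AddCommGroup V] [Module ℚ V] (R : FinRootSystem V)

/-- Cauchy–Schwarz-type bound: for independent roots the product of pairings is ≤ 3. -/
lemma prod_le_three {a b : V} (ha : a ∈ R.roots) (hb : b ∈ R.roots)
    (hind : ¬∃ c : ℚ, b = c • a) (p q : ℤ)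
    (hp : 2 * R.B b a = (p : ℚ) * R.B a a) (hq : 2 * R.B a b = (q : ℚ) * R.B b b) :
    p * q ≤ 3 := by
  by_contra hlt
  push_neg at hlt
  have hAB : (p : ℚ) * R.B a a = (q : ℚ) * R.B b b := by
    rw [← hp, ← hq, R.symm a b]
  have hA := R.pos a ha
  have hB := R.pos b hb
  have hps : 0 < p ↔ 0 < q := by
    constructor <;> intro h
    · by_contra h'
      push_neg at h'
      have h1 : (0 : ℚ) < (p : ℚ) * R.B a a := by positivity
      have h2 : (q : ℚ) * R.B b b ≤ 0 := by
        have : (q : ℚ) ≤ 0 := by exact_mod_cast h'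
        nlinarith
      linarith [hAB ▸ h1]
    · by_contra h'
      push_neg at h'
      have h1 : (0 : ℚ) < (q : ℚ) * R.B b b := by positivity
      have h2 : (p : ℚ) * R.B a a ≤ 0 := by
        have : (p : ℚ) ≤ 0 := by exact_mod_cast h'
        nlinarith
      linarith [hAB ▸ h1]
  rcases lt_trichotomy p 0 with hp0 | hp0 | hp0
  · -- both negative; use -b
    have hq0 : q < 0 := by
      by_contra h'
      push_neg at h'
      rcases lt_or_eq_of_le h' with h'' | h''
      · exact absurd (hps.mpr h'') (by omega)
      · subst h''
        simp at hlt
    have hp' : 2 * R.B (-b) a = ((-p : ℤ) : ℚ) * R.B a a := by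
      simp only [map_neg, LinearMap.neg_apply, Int.cast_neg]
      linarith [hp]
    have hq' : 2 * R.B a (-b) = ((-q : ℤ) : ℚ) * R.B (-b) (-b) := by
      simp only [map_neg, LinearMap.neg_apply, Int.cast_neg]
      linarith [hq]
    have := paux R ha (R.neg_mem b hb) (indep_neg hind) (-p) (-q) hp' hq'
      (by omega) (by omega)
    nlinarith
  · subst hp0
    simp at hlt
  · have hq0 : 0 < q := hps.mp hp0
    have := paux R ha hb hind p q hp hq (by omega) (by omega)
    omega

/-- If B a b > 0 and a, b independent, then a - b is a root. -/
lemma sub_mem {a b : V} (ha : a ∈ R.roots) (hb : b ∈ R.roots)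
    (hind : ¬∃ c : ℚ, b = c • a) (hpos : 0 < R.B a b) : a - b ∈ R.roots := by
  obtain ⟨p, hp⟩ := pairing_int R ha hb
  obtain ⟨q, hq⟩ := pairing_int R hb ha
  -- hp : 2 * B b a = p * B a a ; hq : 2 * B a b = q * B b b
  have hsymm : R.B b a = R.B a b := R.symm b a
  have hp1 : 1 ≤ p := by
    have h0 : 0 < (p : ℚ) * R.B a a := by rw [← hp]; nlinarith [hsymm]
    have : (0 : ℚ) < (p : ℚ) := by
      by_contra h'
      push_neg at h'
      nlinarith [R.pos a ha]
    have : 0 < p := by exact_mod_cast this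
    omega
  have hq1 : 1 ≤ q := by
    have h0 : 0 < (q : ℚ) * R.B b b := by rw [← hq]; nlinarith
    have : (0 : ℚ) < (q : ℚ) := by
      by_contra h'
      push_neg at h'
      nlinarith [R.pos b hb]
    have : 0 < q := by exact_mod_cast this
    omega
  have hple := prod_le_three R ha hb hind p q hp hq
  have hpq : p = 1 ∨ q = 1 := by
    by_contra hc
    push_neg at hc
    have : 2 ≤ p := by omega
    have : 2 ≤ q := by omega
    nlinarith
  rcases hpq with h1 | h1
  · subst h1
    have := reflect_mem' R ha hb 1 (by rw [hp]; push_cast; ring)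
    rw [one_smul] at this
    have := R.neg_mem _ this
    rwa [neg_sub] at this
  · subst h1
    have := reflect_mem' R hb ha 1 (by rw [hq]; push_cast; ring)
    rwa [one_smul] at this
lemma add_mem {a b : V} (ha : a ∈ R.roots) (hb : b ∈ R.roots)
    (hind : ¬∃ c : ℚ, b = c • a) (hneg : R.B a b < 0) : a + b ∈ R.roots := by
  have h := sub_mem R ha (R.neg_mem b hb) (indep_neg hind)
    (by simp only [map_neg, LinearMap.neg_apply]; linarith)
  rwa [sub_neg_eq_add] at h

end Aux
namespace Aux

variable {V : Type} [AddCommGroup V] [Module ℚ V] (R : FinRootSystem V)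

/-- KEY: if γ and γ - 2α are roots and γ ≠ α then ⟨α,γ∨⟩ = 1 and |γ|² = n|α|², n ∈ {1,2,3}. -/
lemma key {γ α : V} (hγ : γ ∈ R.roots) (hα : α ∈ R.roots)
    (hσ : γ - (2:ℚ) • α ∈ R.roots) (hne : γ ≠ α) :
    2 * R.B γ α = R.B γ γ ∧
      ∃ n : ℤ, (1 ≤ n ∧ n ≤ 3) ∧ R.B γ γ = (n : ℚ) * R.B α α := by
  have hGpos := R.pos γ hγ
  have hApos := R.pos α hα
  have hsym : R.B α γ = R.B γ α := R.symm α γ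
  have hne' : γ ≠ -α := by
    rintro rfl
    have h3 : (-3 : ℚ) • α ∈ R.roots := by
      have h : -α - (2:ℚ) • α = (-3:ℚ) • α := by module
      rwa [h] at hσ
    rcases R.reduced α hα (-3) h3 with h | h <;> norm_num at h
  have hind2 : ¬∃ c : ℚ, γ = c • α := by
    intro h
    rcases dep_pm R hα hγ h with h | h
    · exact hne h
    · exact hne' h
  have hind1 : ¬∃ c : ℚ, α = c • γ := indep_flip (root_ne_zero R hα) hind2
  have hCpos : 0 < R.B γ α := by
    by_contra hc
    push_neg at hc
    have hindσ : ¬∃ c : ℚ, γ - (2:ℚ) • α = c • γ := by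
      intro h
      rcases dep_pm R hγ hσ h with h | h
      · have h0 : (2:ℚ) • α = 0 := sub_eq_self.mp h
        rcases smul_eq_zero.mp h0 with h1 | h1
        · norm_num at h1
        · exact root_ne_zero R hα h1
      · apply hne
        have h2 : (2:ℚ) • γ = (2:ℚ) • α := by linear_combination (norm := module) h
        exact smul_right_injective V (by norm_num : (2:ℚ) ≠ 0) h2
    have hpos2 : 0 < R.B γ (γ - (2:ℚ) • α) := by
      simp only [map_sub, map_smul, smul_eq_mul]
      linarith
    have hmem := sub_mem R hγ hσ hindσ hpos2
    have h2 : γ - (γ - (2:ℚ) • α) = (2:ℚ) • α := by module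
    rw [h2] at hmem
    rcases R.reduced α hα 2 hmem with h | h <;> norm_num at h
  obtain ⟨m, hm⟩ := pairing_int R hγ hα
  obtain ⟨n, hn⟩ := pairing_int R hα hγ
  have hm1 : 1 ≤ m := by
    have h0 : 0 < (m : ℚ) := by nlinarith
    have : 0 < m := by exact_mod_cast h0
    omega
  have hn1 : 1 ≤ n := by
    have h0 : 0 < (n : ℚ) := by nlinarith
    have : 0 < n := by exact_mod_cast h0
    omega
  have hmn := prod_le_three R hγ hα hind1 m n hm hn
  have hmeq : m = 1 := by
    by_contra hm2
    have hm2' : 2 ≤ m := by omega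
    have hneq1 : n = 1 := by nlinarith
    have hm3 : m ≤ 3 := by nlinarith
    subst hneq1
    obtain ⟨kk, hk⟩ := pairing_int R hσ hγ
    simp only [map_sub, map_smul, LinearMap.sub_apply, LinearMap.smul_apply,
      smul_eq_mul] at hk
    have hcast : ((2 - 2*m : ℤ) : ℚ) * R.B γ γ = ((kk * (1 + 2*m) : ℤ) : ℚ) * R.B γ γ := by
      push_cast
      linear_combination hk + (2 + 2*(kk:ℚ)) * hm - 4*(kk:ℚ) * hn + (-4 - 6*(kk:ℚ)) * hsym
    have h1 := mul_right_cancel₀ (Bpos_ne R hγ) hcast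
    have h2 : (2 - 2*m : ℤ) = kk * (1 + 2*m) := by exact_mod_cast h1
    interval_cases m <;> omega
  subst hmeq
  have hfst : 2 * R.B γ α = R.B γ γ := by push_cast at hm; linarith
  refine ⟨hfst, n, ⟨hn1, by linarith⟩, by linarith⟩

end Aux
namespace Aux

variable {V : Type} [AddCommGroup V] [Module ℚ V] (R : FinRootSystem V)

lemma comb_eq_zero {α α' : V} (hα0 : α ≠ 0) (hind : ¬∃ c : ℚ, α' = c • α)
    {s t : ℚ} (h : s • α + t • α' = 0) : s = 0 ∧ t = 0 := by
  rcases eq_or_ne t 0 with rfl | ht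
  · rw [zero_smul, add_zero] at h
    rcases smul_eq_zero.mp h with h1 | h1
    · exact ⟨h1, rfl⟩
    · exact absurd h1 hα0
  · exfalso
    have h1 : t • α' = (-s) • α := by
      rw [neg_smul]
      rw [add_comm] at h
      exact eq_neg_of_add_eq_zero_left h
    refine hind ⟨t⁻¹ * (-s), ?_⟩
    rw [← smul_smul, ← h1, smul_smul, inv_mul_cancel₀ ht, one_smul]

lemma indep_of_ne {x y : V} (hx : x ∈ R.roots) (hy : y ∈ R.roots)
    (h1 : y ≠ x) (h2 : y ≠ -x) : ¬∃ c : ℚ, y = c • x := by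
  intro h
  rcases dep_pm R hx hy h with h' | h'
  · exact h1 h'
  · exact h2 h'

/-- G1: if γ - 2α is a root then γ - 2α' is not, for a distinct "simple" pair α, α'. -/
lemma g1 {γ α α' : V} (hγ : γ ∈ R.roots) (hα : α ∈ R.roots) (hα' : α' ∈ R.roots)
    (hσ : γ - (2:ℚ) • α ∈ R.roots)
    (hind : ¬∃ c : ℚ, α' = c • α) (hBle : R.B α α' ≤ 0)
    (hdiff : α - α' ∉ R.roots) : γ - (2:ℚ) • α' ∉ R.roots := by
  intro hσ'
  have hα0 := root_ne_zero R hα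
  have hα'0 := root_ne_zero R hα'
  have hGpos := R.pos γ hγ
  have hApos := R.pos α hα
  have hA'pos := R.pos α' hα'
  have hs1 : R.B α γ = R.B γ α := R.symm α γ
  have hs2 : R.B α' γ = R.B γ α' := R.symm α' γ
  have hs3 : R.B α' α = R.B α α' := R.symm α' α
  have hdiff' : α' - α ∉ R.roots := fun h => hdiff (by
    have := R.neg_mem _ h; rwa [neg_sub] at this)
  -- degenerate cases γ = α or γ = α'
  by_cases hγα : γ = α
  · subst hγα
    have hneg : R.B (γ - (2:ℚ) • α') α' < 0 := by
      simp only [map_sub, map_smul, LinearMap.sub_apply, LinearMap.smul_apply, smul_eq_mul]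
      linarith
    have hindd : ¬∃ c : ℚ, α' = c • (γ - (2:ℚ) • α') := by
      rintro ⟨c, hc⟩
      have h2 : (-c) • γ + (1 + 2*c) • α' = 0 := by
        linear_combination (norm := module) hc
      obtain ⟨h3, h4⟩ := comb_eq_zero hα0 hind h2
      rw [show c = 0 by linarith] at h4; norm_num at h4
    have hmem := add_mem R hσ' hα' hindd hneg
    have h5 : γ - (2:ℚ) • α' + α' = γ - α' := by module
    rw [h5] at hmem
    exact hdiff hmem
  by_cases hγα' : γ = α'
  · subst hγα'
    have hneg : R.B (γ - (2:ℚ) • α) α < 0 := by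
      simp only [map_sub, map_smul, LinearMap.sub_apply, LinearMap.smul_apply, smul_eq_mul]
      linarith
    have hindd : ¬∃ c : ℚ, α = c • (γ - (2:ℚ) • α) := by
      rintro ⟨c, hc⟩
      have h2 : (1 + 2*c) • α + (-c) • γ = 0 := by
        linear_combination (norm := module) hc
      obtain ⟨h3, h4⟩ := comb_eq_zero hα0 hind h2
      rw [show c = 0 by linarith] at h3; norm_num at h3
    have hmem := add_mem R hσ hα hindd hneg
    have h5 : γ - (2:ℚ) • α + α = γ - α := by module
    rw [h5] at hmem
    exact hdiff' hmem
  -- main case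
  obtain ⟨hC, n, ⟨hn1, hn3⟩, hGA⟩ := key R hγ hα hσ hγα
  obtain ⟨hC', n', ⟨hn1', hn3'⟩, hGA'⟩ := key R hγ hα' hσ' hγα'
  obtain ⟨u, hu⟩ := pairing_int R hα hα'
  -- hu : 2 * B α' α = u * B α α
  have huQ : (u : ℚ) * R.B α α ≤ 0 := by rw [← hu]; linarith
  have hu0 : (u : ℚ) ≤ 0 := by nlinarith
  have hn1Q : (1:ℚ) ≤ (n:ℚ) := by exact_mod_cast hn1
  have hn1Q' : (1:ℚ) ≤ (n':ℚ) := by exact_mod_cast hn1'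
  -- φ = γ - α is a root
  have hγnegα : γ ≠ -α := by
    rintro rfl
    simp only [map_neg, LinearMap.neg_apply] at hC
    linarith
  have hφ : γ - α ∈ R.roots := by
    refine sub_mem R hγ hα (indep_of_ne R hγ hα (fun h => hγα h.symm) ?_) (by linarith)
    intro h
    exact hγnegα (by rw [h, neg_neg])
  -- ρ' = γ - α - α' is a root
  have hφα'pos : 0 < R.B (γ - α) α' := by
    simp only [map_sub, LinearMap.sub_apply]
    linarith
  have hindφ : ¬∃ c : ℚ, α' = c • (γ - α) := by
    intro h
    rcases dep_pm R hφ hα' h with h' | h'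
    · -- α' = γ - α, so γ - 2α = α' - α
      apply hdiff'
      have h2 : γ - (2:ℚ) • α = α' - α := by
        linear_combination (norm := module) -h'
      rwa [h2] at hσ
    · -- α' = α - γ, contradiction with B γ α' = G/2 > 0
      have h2 : R.B γ α' = R.B γ α - R.B γ γ := by
        rw [h']; simp only [map_neg, map_sub, LinearMap.neg_apply, LinearMap.sub_apply]
        ring
      linarith
  have hρ' := sub_mem R hφ hα' hindφ hφα'pos
  have hρ'pos := R.pos _ hρ'
  simp only [map_sub, LinearMap.sub_apply] at hρ'pos
  -- hρ'pos : 0 < quadratic form of γ - α - α'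
  -- case u ≤ -1 : contradiction
  have hu0' : u = 0 := by
    by_contra huc
    have hu1 : (u : ℚ) ≤ -1 := by
      have : u ≤ -1 := by
        rcases lt_or_eq_of_le (show u ≤ 0 by exact_mod_cast hu0) with h | h
        · omega
        · exact absurd h huc
      exact_mod_cast this
    nlinarith [hu, hGA, hGA', hρ'pos, hApos, hA'pos, hGpos]
  -- now u = 0, hence A + A' > G, hence n = 1 or n' = 1
  have hu' : R.B α α' = 0 := by
    rw [hu0'] at hu; push_cast at hu; linarith
  have hsum : R.B γ γ < R.B α α + R.B α' α' := by
    nlinarith [hρ'pos]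
  have hcase : n = 1 ∨ n' = 1 := by
    by_contra hc
    push_neg at hc
    have h2 : (2:ℚ) ≤ (n:ℚ) := by exact_mod_cast (by omega : 2 ≤ n)
    have h2' : (2:ℚ) ≤ (n':ℚ) := by exact_mod_cast (by omega : 2 ≤ n')
    nlinarith
  rcases hcase with h1 | h1
  · -- n = 1 : A = G, use crystallographic condition on (σ, α')
    rw [h1] at hGA; push_cast at hGA
    -- hGA : G = A
    obtain ⟨kk, hk⟩ := pairing_int R hσ hα'
    simp only [map_sub, map_smul, LinearMap.sub_apply, LinearMap.smul_apply,
      smul_eq_mul] at hk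
    have hcast : ((1:ℤ):ℚ) * R.B γ γ = ((3*kk : ℤ):ℚ) * R.B γ γ := by
      push_cast
      linear_combination hk - hC' - 2*hs2 + 2*hu' + 2*hs3
        - (kk:ℚ)*(2*hC + 2*hs1 - 2*hC + 4*hGA) - 2*(kk:ℚ)*hC + 2*hs3 + 2*hu'
    have h2 := mul_right_cancel₀ (Bpos_ne R hγ) hcast
    have h3 : (1:ℤ) = 3*kk := by exact_mod_cast h2
    omega
  · -- n' = 1 : A' = G, use crystallographic condition on (σ', α)
    rw [h1] at hGA'; push_cast at hGA'
    obtain ⟨kk, hk⟩ := pairing_int R hσ' hα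
    simp only [map_sub, map_smul, LinearMap.sub_apply, LinearMap.smul_apply,
      smul_eq_mul] at hk
    have hcast : ((1:ℤ):ℚ) * R.B γ γ = ((3*kk : ℤ):ℚ) * R.B γ γ := by
      push_cast
      linear_combination hk - hC - 2*hs1 + 2*hu'
        - (kk:ℚ)*(2*hC' + 2*hs2 - 2*hC' + 4*hGA') - 2*(kk:ℚ)*hC' + 2*hu'
    have h2 := mul_right_cancel₀ (Bpos_ne R hγ) hcast
    have h3 : (1:ℤ) = 3*kk := by exact_mod_cast h2
    omega

end Aux
namespace Aux

variable {V : Type} [AddCommGroup V] [Module ℚ V] (R : FinRootSystem V)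

/-- G4: γ = 2α' + α is impossible when γ - 2α is a root. -/
lemma g4 {γ α α' : V} (hγ : γ ∈ R.roots) (hα : α ∈ R.roots) (hα' : α' ∈ R.roots)
    (hσ : γ - (2:ℚ) • α ∈ R.roots)
    (hind : ¬∃ c : ℚ, α' = c • α) (hBle : R.B α α' ≤ 0)
    (hdiff : α - α' ∉ R.roots) (heq : γ = (2:ℚ) • α' + α) : False := by
  have hα0 := root_ne_zero R hα
  have hA'pos := R.pos α' hα'
  have hs3 : R.B α' α = R.B α α' := R.symm α' α
  have hσ2 : (2:ℚ) • α' - α ∈ R.roots := by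
    have h : γ - (2:ℚ) • α = (2:ℚ) • α' - α := by rw [heq]; module
    rwa [h] at hσ
  have hpos : 0 < R.B ((2:ℚ) • α' - α) α' := by
    simp only [map_sub, map_smul, LinearMap.sub_apply, LinearMap.smul_apply, smul_eq_mul]
    linarith
  have hindd : ¬∃ c : ℚ, α' = c • ((2:ℚ) • α' - α) := by
    rintro ⟨c, hc⟩
    have h2 : c • α + (1 - 2*c) • α' = 0 := by
      linear_combination (norm := module) hc
    obtain ⟨h3, h4⟩ := comb_eq_zero hα0 hind h2
    rw [h3] at h4; norm_num at h4
  have hmem := sub_mem R hσ2 hα' hindd hpos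
  have h5 : (2:ℚ) • α' - α - α' = α' - α := by module
  rw [h5] at hmem
  have := R.neg_mem _ hmem
  rw [neg_sub] at this
  exact hdiff this

/-- G3: γ - 2α' - α is not a root when γ - 2α is. -/
lemma g3 {γ α α' : V} (hγ : γ ∈ R.roots) (hα : α ∈ R.roots) (hα' : α' ∈ R.roots)
    (hσ : γ - (2:ℚ) • α ∈ R.roots)
    (hind : ¬∃ c : ℚ, α' = c • α) (hBle : R.B α α' ≤ 0)
    (hdiff : α - α' ∉ R.roots) (hρ : γ - (2:ℚ) • α' - α ∈ R.roots) : False := by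
  have hα0 := root_ne_zero R hα
  have hα'0 := root_ne_zero R hα'
  have hGpos := R.pos γ hγ
  have hApos := R.pos α hα
  have hA'pos := R.pos α' hα'
  have hs1 : R.B α γ = R.B γ α := R.symm α γ
  have hs2 : R.B α' γ = R.B γ α' := R.symm α' γ
  have hs3 : R.B α' α = R.B α α' := R.symm α' α
  have hdiff' : α' - α ∉ R.roots := fun h => hdiff (by
    have := R.neg_mem _ h; rwa [neg_sub] at this)
  -- γ ≠ α
  have hγα : γ ≠ α := by
    rintro rfl
    have h : γ - (2:ℚ) • α' - γ = (-2 : ℚ) • α' := by module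
    rw [h] at hρ
    rcases R.reduced α' hα' (-2) hρ with h' | h' <;> norm_num at h'
  obtain ⟨hC, n, ⟨hn1, hn3⟩, hGA⟩ := key R hγ hα hσ hγα
  -- φ = γ - α
  have hγnegα : γ ≠ -α := by
    rintro rfl
    simp only [map_neg, LinearMap.neg_apply] at hC
    linarith
  have hφ : γ - α ∈ R.roots := by
    refine sub_mem R hγ hα (indep_of_ne R hγ hα (fun h => hγα h.symm) ?_) (by linarith)
    intro h
    exact hγnegα (by rw [h, neg_neg])
  -- φ ≠ α'
  have hφα' : γ - α ≠ α' := by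
    intro h
    apply hdiff'
    have h2 : γ - (2:ℚ) • α = α' - α := by
      linear_combination (norm := module) h
    rwa [h2] at hσ
  -- ρ = φ - 2α'
  have hρφ : (γ - α) - (2:ℚ) • α' ∈ R.roots := by
    have h : (γ - α) - (2:ℚ) • α' = γ - (2:ℚ) • α' - α := by module
    rwa [h]
  obtain ⟨hCφ, nφ, ⟨hnφ1, hnφ3⟩, hGAφ⟩ := key R hφ hα' hρφ hφα'
  -- |φ|² = A
  have hBφφ : R.B (γ - α) (γ - α) = R.B α α := by
    simp only [map_sub, LinearMap.sub_apply]
    linarith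
  rw [hBφφ] at hGAφ
  -- hGAφ : A = nφ * A'
  -- hCφ (expanded) : 2 B φ α' = B φ φ = A
  have hCφ' : 2 * R.B (γ - α) α' = R.B α α := by rw [hCφ, hBφφ]
  simp only [map_sub, LinearMap.sub_apply] at hCφ'
  -- hCφ' : 2 * (B γ α' - B α α') = A
  obtain ⟨u, hu⟩ := pairing_int R hα hα'
  -- hu : 2 B α' α = u A
  have huQ : (u : ℚ) * R.B α α ≤ 0 := by rw [← hu]; linarith
  have hu0 : (u : ℚ) ≤ 0 := by nlinarith
  have hu0' : u ≤ 0 := by exact_mod_cast hu0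
  obtain ⟨u', hu'⟩ := pairing_int R hα' hα
  -- hu' : 2 B α α' = u' A'
  have hApos' := Bpos_ne R hα'
  have huu' : u' = u * nφ := by
    have hq : (u' : ℚ) * R.B α' α' = ((u * nφ : ℤ) : ℚ) * R.B α' α' := by
      push_cast
      linear_combination hu - hu' + hs3 + (u:ℚ) * hGAφ - 3*hs3
    have := mul_right_cancel₀ hApos' hq
    exact_mod_cast this
  have hprod := prod_le_three R hα hα' hind u u' hu hu'
  have hu01 : u = 0 ∨ u = -1 := by
    by_contra hcon
    push_neg at hcon
    have hle : u ≤ -2 := by omega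
    have hp2 : u * u * nφ ≤ 3 := by
      have h7 := hprod
      rw [huu'] at h7
      linarith [show u * (u * nφ) = u * u * nφ from by ring]
    have h4 : 4 ≤ u * u := by nlinarith
    have h5 : u * u * 1 ≤ u * u * nφ := mul_le_mul_of_nonneg_left hnφ1 (by positivity)
    linarith
  -- B γ α' = (1+u) A / 2
  have hBγα' : 2 * R.B γ α' = (1 + (u:ℚ)) * R.B α α := by
    linear_combination hCφ' + hu - 2*hs3
  -- w' : 2 B α' γ = w' G, so (1+u) = w' n
  obtain ⟨w', hw'⟩ := pairing_int R hγ hα'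
  have hGne := Bpos_ne R hγ
  have hApne := Bpos_ne R hα
  have hwn : 1 + u = w' * n := by
    have hq : ((1 + u : ℤ) : ℚ) * R.B α α = ((w' * n : ℤ) : ℚ) * R.B α α := by
      push_cast
      linear_combination -hBγα' + hw' - 2*hs2 + (w':ℚ) * hGA
    have := mul_right_cancel₀ hApne hq
    exact_mod_cast this
  -- z : 2 B α' σ = z Bσσ, so (1 - u) = z (4 - n)
  obtain ⟨z, hz⟩ := pairing_int R hσ hα'
  simp only [map_sub, map_smul, LinearMap.sub_apply, LinearMap.smul_apply,
    smul_eq_mul] at hz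
  have hzn : 1 - u = z * (4 - n) := by
    have hq : ((1 - u : ℤ) : ℚ) * R.B α α = ((z * (4 - n) : ℤ) : ℚ) * R.B α α := by
      push_cast
      linear_combination hz - 2*hs2 - hBγα' + 2*hu
        + (z:ℚ)*(-2*hs1 - 2*hC - hGA)
    have := mul_right_cancel₀ hApne hq
    exact_mod_cast this
  -- case analysis on n
  rcases (by omega : n = 1 ∨ n = 2 ∨ n = 3) with hn | hn | hn
  · -- n = 1 : (1-u) = 3z with u ∈ {0,-1}, impossible
    subst hn
    norm_num at hzn
    rcases hu01 with h | h <;> omega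
  · -- n = 2 : u = -1, study ρ against α
    subst hn
    have hu1 : u = -1 := by
      norm_num at hzn
      rcases hu01 with h | h
      · omega
      · exact h
    rw [hu1] at hu hBγα'
    push_cast at hu hBγα' hGA
    obtain ⟨s, hs⟩ := pairing_int R hα hρ
    obtain ⟨t, ht⟩ := pairing_int R hρ hα
    have hsE := hs
    have htE := ht
    simp only [map_sub, map_smul, LinearMap.sub_apply, LinearMap.smul_apply,
      smul_eq_mul] at hsE htE
    have hseq : s = 2 := by
      have hq : ((s:ℤ):ℚ) * R.B α α = ((2:ℤ):ℚ) * R.B α α := by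
        push_cast
        linear_combination -hsE + hC + hGA - 2*hu
      have := mul_right_cancel₀ hApne hq
      exact_mod_cast this
    have hteq : 2 * nφ = t * (4 - nφ) := by
      have hq : ((2 * nφ : ℤ):ℚ) * R.B α' α' = ((t * (4 - nφ) : ℤ):ℚ) * R.B α' α' := by
        push_cast
        linear_combination htE - 2*hs1 - hC - 4*hs3 + 2*hu - hGA - 2*hGAφ
          + (t:ℚ)*(-2*hs2 - 2*hBγα' - hs1 - hC + 2*hu - 2*hs3 - hGAφ)
      have := mul_right_cancel₀ hApos' hq
      exact_mod_cast this
    by_cases hdep : ∃ c : ℚ, γ - (2:ℚ) • α' - α = c • α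
    · rcases dep_pm R hα hρ hdep with h' | h'
      · have h2 : γ - (2:ℚ) • α = (2:ℚ) • α' := by
          linear_combination (norm := module) h'
        rw [h2] at hσ
        rcases R.reduced α' hα' 2 hσ with h'' | h'' <;> norm_num at h''
      · have h2 : γ = (2:ℚ) • α' := by
          linear_combination (norm := module) h'
        rw [h2] at hγ
        rcases R.reduced α' hα' 2 hγ with h'' | h'' <;> norm_num at h''
    · have hprod2 := prod_le_three R hα hρ hdep s t hs ht
      rw [hseq] at hprod2
      interval_cases nφ <;> omega
  · -- n = 3 : u = -1 (from w' equation), study ψ = γ - α - α'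
    subst hn
    have hu1 : u = -1 := by
      rcases hu01 with h | h
      · rw [h] at hwn; omega
      · exact h
    rw [hu1] at hu hBγα'
    push_cast at hu hBγα' hGA
    have hφα'pos : 0 < R.B (γ - α) α' := by
      have hh : 2 * R.B (γ - α) α' = R.B α α := by
        simp only [map_sub, LinearMap.sub_apply]
        linarith [hCφ']
      linarith
    have hindφ : ¬∃ c : ℚ, α' = c • (γ - α) := by
      intro h
      rcases dep_pm R hφ hα' h with h' | h'
      · exact hφα' h'.symm
      · have h2 : R.B (γ - α) α' = -(R.B (γ - α) (γ - α)) := by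
          rw [h']; simp only [map_neg, LinearMap.neg_apply]
        rw [hBφφ] at h2
        linarith
    have hψ := sub_mem R hφ hα' hindφ hφα'pos
    obtain ⟨s, hs⟩ := pairing_int R hα hψ
    obtain ⟨t, ht⟩ := pairing_int R hψ hα
    have hsE := hs
    have htE := ht
    simp only [map_sub, map_smul, LinearMap.sub_apply, LinearMap.smul_apply,
      smul_eq_mul] at hsE htE
    have hseq : s = 2 := by
      have hq : ((s:ℤ):ℚ) * R.B α α = ((2:ℤ):ℚ) * R.B α α := by
        push_cast
        linear_combination -hsE + hC + hGA - hu
      have := mul_right_cancel₀ hApne hq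
      exact_mod_cast this
    have hteq : 2 * nφ = t := by
      have hq : ((2 * nφ : ℤ):ℚ) * R.B α' α' = ((t:ℤ):ℚ) * R.B α' α' := by
        push_cast
        linear_combination htE - 2*hs1 - hC - 2*hs3 + hu - hGA - 2*hGAφ
          + (t:ℚ)*(-hC - hs1 - hs2 - hBγα' + hu - hs3)
      have := mul_right_cancel₀ hApos' hq
      exact_mod_cast this
    by_cases hdep : ∃ c : ℚ, γ - α - α' = c • α
    · rcases dep_pm R hα hψ hdep with h' | h'
      · have h2 : γ - (2:ℚ) • α' - α = α - α' := by
          linear_combination (norm := module) h'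
        rw [h2] at hρ
        exact hdiff hρ
      · have h2 : γ = α' := by
          linear_combination (norm := module) h'
        subst h2
        have hneg : R.B (γ - (2:ℚ) • α) α < 0 := by
          simp only [map_sub, map_smul, LinearMap.sub_apply, LinearMap.smul_apply,
            smul_eq_mul]
          linarith [hs3, hu]
        have hindd : ¬∃ c : ℚ, α = c • (γ - (2:ℚ) • α) := by
          rintro ⟨c, hc⟩
          have h4 : (1 + 2*c) • α + (-c) • γ = 0 := by
            linear_combination (norm := module) hc
          obtain ⟨h5, h6⟩ := comb_eq_zero hα0 hind h4
          rw [show c = 0 by linarith] at h5; norm_num at h5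
        have hmem := add_mem R hσ hα hindd hneg
        have h5 : γ - (2:ℚ) • α + α = γ - α := by module
        rw [h5] at hmem
        exact hdiff' hmem
    · have hprod2 := prod_le_three R hα hψ hdep s t hs ht
      rw [hseq, ← hteq] at hprod2
      omega

end Aux
namespace Aux

variable {V : Type} [AddCommGroup V] [Module ℚ V] (R : FinRootSystem V)
variable {ℓ : ℕ} (Bs : RSBase R ℓ)

lemma coeff_zero : ∀ g : Fin ℓ → ℚ, ∑ i, g i • Bs.a i = 0 → ∀ i, g i = 0 :=
  Fintype.linearIndependent_iff.mp Bs.indep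

lemma sum_single (s : Fin ℓ) (c : ℚ) :
    ∑ i, (if i = s then c else 0) • Bs.a i = c • Bs.a s := by
  rw [Finset.sum_eq_single s]
  · simp
  · intro b _ hb; simp [hb]
  · intro h; exact absurd (Finset.mem_univ s) h

lemma asub (s r : Fin ℓ) (h : s ≠ r) : Bs.a s - Bs.a r ∉ R.roots := by
  intro hmem
  rcases Bs.decomp _ hmem with ⟨c, hc⟩ | ⟨c, hc⟩
  · have hg : ∑ i, ((c i : ℚ) - (if i = s then 1 else 0) + (if i = r then 1 else 0))
        • Bs.a i = 0 := by
      simp only [sub_smul, add_smul, Finset.sum_add_distrib, Finset.sum_sub_distrib]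
      rw [sum_single R Bs s 1, sum_single R Bs r 1, one_smul, one_smul, ← hc]
      abel
    have h1 := coeff_zero R Bs _ hg r
    simp [Ne.symm h] at h1
    have h0 : (0:ℚ) ≤ (c r : ℚ) := by positivity
    linarith
  · have hg : ∑ i, ((c i : ℚ) + (if i = s then 1 else 0) - (if i = r then 1 else 0))
        • Bs.a i = 0 := by
      simp only [sub_smul, add_smul, Finset.sum_add_distrib, Finset.sum_sub_distrib]
      rw [sum_single R Bs s 1, sum_single R Bs r 1, one_smul, one_smul]
      have hc' : ∑ i, (c i : ℚ) • Bs.a i = -(Bs.a s - Bs.a r) := by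
        rw [← neg_eq_iff_eq_neg.mpr hc]
      rw [hc']
      abel
    have h1 := coeff_zero R Bs _ hg s
    simp [h] at h1
    have h0 : (0:ℚ) ≤ (c s : ℚ) := by positivity
    linarith

lemma aneg (s r : Fin ℓ) : Bs.a s ≠ -Bs.a r := by
  intro h
  have hg : ∑ i, ((if i = s then (1:ℚ) else 0) + (if i = r then 1 else 0)) • Bs.a i = 0 := by
    simp only [add_smul, Finset.sum_add_distrib]
    rw [sum_single R Bs s 1, sum_single R Bs r 1, one_smul, one_smul, h]
    abel
  have h1 := coeff_zero R Bs _ hg s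
  by_cases hsr : s = r
  · subst hsr
    simp at h1
  · simp [hsr] at h1

lemma ane (s r : Fin ℓ) (h : s ≠ r) : Bs.a s ≠ Bs.a r := by
  intro heq
  have hg : ∑ i, ((if i = s then (1:ℚ) else 0) - (if i = r then 1 else 0)) • Bs.a i = 0 := by
    simp only [sub_smul, Finset.sum_sub_distrib]
    rw [sum_single R Bs s 1, sum_single R Bs r 1, one_smul, one_smul, heq]
    abel
  have h1 := coeff_zero R Bs _ hg s
  simp [h] at h1

lemma θsum (r : Fin ℓ) : Bs.θ + Bs.a r ∉ R.roots := by
  intro hmem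
  obtain ⟨c, hc⟩ := Bs.θ_highest _ hmem
  have hg : ∑ i, ((c i : ℚ) + (if i = r then 1 else 0)) • Bs.a i = 0 := by
    simp only [add_smul, Finset.sum_add_distrib]
    rw [sum_single R Bs r 1, one_smul, ← hc]
    abel
  have h1 := coeff_zero R Bs _ hg r
  simp at h1
  have h0 : (0:ℚ) ≤ (c r : ℚ) := by positivity
  linarith

lemma θnea (r : Fin ℓ) : Bs.θ ≠ -Bs.a r := by
  intro h
  obtain ⟨c, hc⟩ := Bs.θ_highest _ (Bs.mem r)
  rw [h] at hc
  have hg : ∑ i, ((c i : ℚ) + (if i = r then 2 else 0)) • Bs.a i = 0 := by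
    simp only [add_smul, Finset.sum_add_distrib]
    rw [sum_single R Bs r 2, ← hc]
    module
  have h2 := coeff_zero R Bs _ hg r
  simp at h2
  have h0 : (0:ℚ) ≤ (c r : ℚ) := by positivity
  linarith

lemma θeq (r : Fin ℓ) (h : Bs.θ = Bs.a r) :
    ∀ x ∈ R.roots, x = Bs.a r ∨ x = -Bs.a r := by
  intro x hx
  obtain ⟨c, hc⟩ := Bs.θ_highest x hx
  obtain ⟨d, hd⟩ := Bs.θ_highest (-x) (R.neg_mem x hx)
  rw [h] at hc hd
  have hg : ∑ i, ((c i : ℚ) + (d i : ℚ) - (if i = r then 2 else 0)) • Bs.a i = 0 := by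
    simp only [sub_smul, add_smul, Finset.sum_add_distrib, Finset.sum_sub_distrib]
    rw [sum_single R Bs r 2, ← hc, ← hd]
    module
  have hcoeff := coeff_zero R Bs _ hg
  have hzero : ∀ i, i ≠ r → (c i : ℚ) = 0 := by
    intro i hi
    have h1 := hcoeff i
    simp [hi] at h1
    have h2 : (0:ℚ) ≤ (c i : ℚ) := by positivity
    have h3 : (0:ℚ) ≤ (d i : ℚ) := by positivity
    linarith
  have hsum : ∑ i, (c i : ℚ) • Bs.a i = (c r : ℚ) • Bs.a r := by
    rw [Finset.sum_eq_single r]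
    · intro b _ hb; rw [hzero b hb, zero_smul]
    · intro hr; exact absurd (Finset.mem_univ r) hr
  rw [hsum] at hc
  have hxx : x = (1 - (c r : ℚ)) • Bs.a r := by
    linear_combination (norm := module) -hc
  rcases R.reduced (Bs.a r) (Bs.mem r) _ (hxx ▸ hx) with h1 | h1
  · left; rw [hxx, h1, one_smul]
  · right; rw [hxx, h1, neg_smul, one_smul]

end Aux
namespace Aux

variable {V : Type} [AddCommGroup V] [Module ℚ V] (R : FinRootSystem V)
variable {ℓ : ℕ} (Bs : RSBase R ℓ)

lemma av_zero : (affSimple R Bs 0).1 = -Bs.θ := by simp [affSimple]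

lemma av_succ (s : Fin ℓ) : (affSimple R Bs s.succ).1 = Bs.a s := by simp [affSimple]

lemma Pmem (i : Fin (ℓ + 1)) : (affSimple R Bs i).1 ∈ R.roots := by
  rcases Fin.eq_zero_or_eq_succ i with rfl | ⟨s, rfl⟩
  · rw [av_zero]; exact R.neg_mem _ Bs.θ_mem
  · rw [av_succ]; exact Bs.mem s

lemma Pne {i j : Fin (ℓ + 1)} (hij : i ≠ j) :
    (affSimple R Bs i).1 ≠ (affSimple R Bs j).1 := by
  rcases Fin.eq_zero_or_eq_succ i with rfl | ⟨s, rfl⟩ <;>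
    rcases Fin.eq_zero_or_eq_succ j with rfl | ⟨r, rfl⟩
  · exact absurd rfl hij
  · rw [av_zero, av_succ]
    intro h
    exact θnea R Bs r (by rw [← neg_eq_iff_eq_neg.mpr h.symm])
  · rw [av_zero, av_succ]
    intro h
    exact θnea R Bs s (by rw [← neg_eq_iff_eq_neg.mpr h])
  · rw [av_succ, av_succ]
    exact ane R Bs s r (fun h => hij (by rw [h]))

lemma Pdiff {i j : Fin (ℓ + 1)} (hij : i ≠ j) :
    (affSimple R Bs i).1 - (affSimple R Bs j).1 ∉ R.roots := by
  rcases Fin.eq_zero_or_eq_succ i with rfl | ⟨s, rfl⟩ <;>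
    rcases Fin.eq_zero_or_eq_succ j with rfl | ⟨r, rfl⟩
  · exact absurd rfl hij
  · rw [av_zero, av_succ]
    intro h
    have := R.neg_mem _ h
    rw [show -(-Bs.θ - Bs.a r) = Bs.θ + Bs.a r by module] at this
    exact θsum R Bs r this
  · rw [av_zero, av_succ]
    intro h
    rw [show Bs.a s - -Bs.θ = Bs.θ + Bs.a s by module] at h
    exact θsum R Bs s h
  · rw [av_succ, av_succ]
    exact asub R Bs s r (fun h => hij (by rw [h]))

lemma PB {i j : Fin (ℓ + 1)} (hij : i ≠ j) :
    R.B (affSimple R Bs i).1 (affSimple R Bs j).1 ≤ 0 := by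
  by_contra hbp
  push_neg at hbp
  by_cases hdep : ∃ c : ℚ, (affSimple R Bs j).1 = c • (affSimple R Bs i).1
  · rcases dep_pm R (Pmem R Bs i) (Pmem R Bs j) hdep with h | h
    · exact Pne R Bs hij h.symm
    · rw [h, map_neg] at hbp
      have := R.pos _ (Pmem R Bs i)
      linarith
  · exact Pdiff R Bs hij (sub_mem R (Pmem R Bs i) (Pmem R Bs j) hdep hbp)

lemma Pdeg {i j : Fin (ℓ + 1)} (hij : i ≠ j)
    (h : (affSimple R Bs j).1 = -(affSimple R Bs i).1) :
    ∀ x ∈ R.roots, x = (affSimple R Bs i).1 ∨ x = -(affSimple R Bs i).1 := by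
  rcases Fin.eq_zero_or_eq_succ i with rfl | ⟨s, rfl⟩ <;>
    rcases Fin.eq_zero_or_eq_succ j with rfl | ⟨r, rfl⟩
  · exact absurd rfl hij
  · rw [av_zero] at *
    rw [av_succ, neg_neg] at h
    intro x hx
    rcases θeq R Bs r (h.symm) x hx with h1 | h1
    · right; rw [h1, neg_neg, ← h]
    · left; rw [h1, ← h]
  · rw [av_succ] at *
    rw [av_zero] at h
    have hθ : Bs.θ = Bs.a s := by
      have := congrArg Neg.neg h
      rwa [neg_neg, neg_neg] at this
    intro x hx
    rcases θeq R Bs s hθ x hx with h1 | h1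
    · left; exact h1
    · right; exact h1
  · rw [av_succ, av_succ] at h
    exact absurd h (aneg R Bs r s)

end Aux
namespace Aux

variable {V : Type} [AddCommGroup V] [Module ℚ V] (R : FinRootSystem V)
variable {ℓ : ℕ} (Bs : RSBase R ℓ)

lemma comp1 (x : V) (m : ℤ) (pp : V × ℤ) :
    ((x, m) - 2 • pp).1 = x - (2:ℚ) • pp.1 := by
  simp only [Prod.fst_sub, Prod.smul_fst]
  rw [two_nsmul, two_smul]

lemma comp2 (x : V) (m : ℤ) (pp qq : V × ℤ) :
    ((x, m) - 2 • qq - pp).1 = x - (2:ℚ) • qq.1 - pp.1 := by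
  simp only [Prod.fst_sub, Prod.smul_fst]
  rw [two_nsmul, two_smul]

end Aux


/-- Let `𝔤` be an (untwisted) affine Kac–Moody algebra and let
`β = γ + kδ` be a real positive root (`γ ∈ Φ̊`, `k ≥ 0`).  If `β - 2α_i` is a root
for some simple root `α_i` of `𝔤`, then for any `j ≠ i` neither `β - 2α_j` nor
`β - 2α_j - α_i` is a root or zero. -/
theorem affine_beta_two_alpha_unique (R : FinRootSystem V) {ℓ : ℕ} (Bs : RSBase R ℓ)
    (γ : V) (hγ : γ ∈ R.roots) (k : ℕ)
    (hβpos : 0 < k ∨ ∃ c : Fin ℓ → ℕ, γ = ∑ i, (c i : ℚ) • Bs.a i)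
    (i : Fin (ℓ + 1))
    (hi : ((γ, (k : ℤ)) - 2 • affSimple R Bs i) ∈ affRoots R) :
    ∀ j : Fin (ℓ + 1), j ≠ i →
      (((γ, (k : ℤ)) - 2 • affSimple R Bs j) ∉ affRoots R ∧
        ((γ, (k : ℤ)) - 2 • affSimple R Bs j) ≠ 0) ∧
      (((γ, (k : ℤ)) - 2 • affSimple R Bs j - affSimple R Bs i) ∉ affRoots R ∧
        ((γ, (k : ℤ)) - 2 • affSimple R Bs j - affSimple R Bs i) ≠ 0) := by
  classical
  intro j hji
  have hij : i ≠ j := fun h => hji h.symm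
  have hα : (affSimple R Bs i).1 ∈ R.roots := Aux.Pmem R Bs i
  have hα' : (affSimple R Bs j).1 ∈ R.roots := Aux.Pmem R Bs j
  have hBle := Aux.PB R Bs hij
  have hdiff := Aux.Pdiff R Bs hij
  have hne := Aux.Pne R Bs hij
  -- extract the finite part of the hypothesis
  have hσV : γ - (2:ℚ) • (affSimple R Bs i).1 ∈ R.roots := by
    simp only [affRoots, Set.mem_union, Set.mem_setOf_eq] at hi
    rcases hi with h | ⟨h0, _⟩
    · rwa [Aux.comp1] at h
    · exfalso
      rw [Aux.comp1] at h0
      have hg2 : γ = (2:ℚ) • (affSimple R Bs i).1 := sub_eq_zero.mp h0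
      rcases R.reduced _ hα 2 (hg2 ▸ hγ) with hh | hh <;> norm_num at hh
  by_cases hdep : ∃ c : ℚ, (affSimple R Bs j).1 = c • (affSimple R Bs i).1
  · -- degenerate case : α' = -α and all roots are ±α
    rcases Aux.dep_pm R hα hα' hdep with he | he
    · exact absurd he.symm hne
    have hall := Aux.Pdeg R Bs hij he
    have he0 := Aux.root_ne_zero R hα
    have hsc : ∀ c d : ℚ, c • (affSimple R Bs i).1 = d • (affSimple R Bs i).1 → c = d := by
      intro c d hcd
      have h0 : (c - d) • (affSimple R Bs i).1 = 0 := by rw [sub_smul, hcd, sub_self]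
      rcases smul_eq_zero.mp h0 with h1 | h1
      · exact sub_eq_zero.mp h1
      · exact absurd h1 he0
    have hγe : γ = (affSimple R Bs i).1 := by
      rcases hall γ hγ with h1 | h1
      · exact h1
      · exfalso
        have hσ3 : γ - (2:ℚ) • (affSimple R Bs i).1 = (-3:ℚ) • (affSimple R Bs i).1 := by
          rw [h1]; module
        rw [hσ3] at hσV
        rcases hall _ hσV with h2 | h2
        · have h3 := hsc (-3) 1 (by rw [h2]; module)
          norm_num at h3
        · have h3 := hsc (-3) (-1) (by rw [h2]; module)
          norm_num at h3
    have hX1 : γ - (2:ℚ) • (affSimple R Bs j).1 = (3:ℚ) • (affSimple R Bs i).1 := by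
      rw [hγe, he]; module
    have hY1 : γ - (2:ℚ) • (affSimple R Bs j).1 - (affSimple R Bs i).1
        = (2:ℚ) • (affSimple R Bs i).1 := by
      rw [hγe, he]; module
    have hX1ne : (3:ℚ) • (affSimple R Bs i).1 ∉ R.roots := by
      intro h
      rcases hall _ h with h2 | h2
      · have h3 := hsc 3 1 (by rw [h2]; module); norm_num at h3
      · have h3 := hsc 3 (-1) (by rw [h2]; module); norm_num at h3
    have hY1ne : (2:ℚ) • (affSimple R Bs i).1 ∉ R.roots := by
      intro h
      rcases hall _ h with h2 | h2
      · have h3 := hsc 2 1 (by rw [h2]; module); norm_num at h3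
      · have h3 := hsc 2 (-1) (by rw [h2]; module); norm_num at h3
    have hX0 : (3:ℚ) • (affSimple R Bs i).1 ≠ 0 := by
      intro h
      rcases smul_eq_zero.mp h with h1 | h1
      · norm_num at h1
      · exact he0 h1
    have hY0 : (2:ℚ) • (affSimple R Bs i).1 ≠ 0 := by
      intro h
      rcases smul_eq_zero.mp h with h1 | h1
      · norm_num at h1
      · exact he0 h1
    refine ⟨⟨?_, ?_⟩, ?_, ?_⟩
    · intro hX
      simp only [affRoots, Set.mem_union, Set.mem_setOf_eq] at hX
      rcases hX with h | ⟨h0, _⟩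
      · rw [Aux.comp1, hX1] at h
        exact hX1ne h
      · rw [Aux.comp1, hX1] at h0
        exact hX0 h0
    · intro h0
      have h1 := congrArg Prod.fst h0
      rw [Aux.comp1, hX1] at h1
      exact hX0 h1
    · intro hY
      simp only [affRoots, Set.mem_union, Set.mem_setOf_eq] at hY
      rcases hY with h | ⟨h0, _⟩
      · rw [Aux.comp2, hY1] at h
        exact hY1ne h
      · rw [Aux.comp2, hY1] at h0
        exact hY0 h0
    · intro h0
      have h1 := congrArg Prod.fst h0
      rw [Aux.comp2, hY1] at h1
      exact hY0 h1
  · -- main case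
    refine ⟨⟨?_, ?_⟩, ?_, ?_⟩
    · intro hX
      simp only [affRoots, Set.mem_union, Set.mem_setOf_eq] at hX
      rcases hX with h | ⟨h0, _⟩
      · rw [Aux.comp1] at h
        exact Aux.g1 R hγ hα hα' hσV hdep hBle hdiff h
      · rw [Aux.comp1] at h0
        have hg2 : γ = (2:ℚ) • (affSimple R Bs j).1 := sub_eq_zero.mp h0
        rcases R.reduced _ hα' 2 (hg2 ▸ hγ) with hh | hh <;> norm_num at hh
    · intro h0
      have h1 := congrArg Prod.fst h0
      rw [Aux.comp1] at h1
      have hg2 : γ = (2:ℚ) • (affSimple R Bs j).1 := sub_eq_zero.mp h1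
      rcases R.reduced _ hα' 2 (hg2 ▸ hγ) with hh | hh <;> norm_num at hh
    · intro hY
      simp only [affRoots, Set.mem_union, Set.mem_setOf_eq] at hY
      rcases hY with h | ⟨h0, _⟩
      · rw [Aux.comp2] at h
        exact Aux.g3 R hγ hα hα' hσV hdep hBle hdiff h
      · rw [Aux.comp2] at h0
        have hg2 : γ = (2:ℚ) • (affSimple R Bs j).1 + (affSimple R Bs i).1 := by
          linear_combination (norm := module) h0
        exact Aux.g4 R hγ hα hα' hσV hdep hBle hdiff hg2
    · intro h0
      have h1 := congrArg Prod.fst h0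
      rw [Aux.comp2] at h1
      rw [Prod.fst_zero] at h1
      have hg2 : γ = (2:ℚ) • (affSimple R Bs j).1 + (affSimple R Bs i).1 := by
        linear_combination (norm := module) h1
      exact Aux.g4 R hγ hα hα' hσV hdep hBle hdiff hg2
end

section
/- Let (λ, μ, β) be a Wahl triple in an affine Kac–Moody algebra 𝔤 with β a real root and suppose μ(β^∨) = 1. Then for every simple root α_i with n := λ(α_i^∨) + 1, the weight space V(μ)_{μ − β + nα_i} is zero. Consequently e_i^{λ(α_i^∨)+1} annihilates any vector of weight μ−β in V(μ). -/
/-- Let `(λ, μ, β)` be a Wahl triple in an affine Kac–Moody algebra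
with `β` a real root (`B β β ≠ 0`) and `μ(β^∨) = 1`.  Then for every simple root
`α_i`, with `n := λ(α_i^∨) + 1`, the weight space `V(μ)_{μ-β+nα_i}` is zero; hence
`e_i^{λ(α_i^∨)+1}` annihilates any vector of weight `μ - β` in `V(μ)`.

Here the weight lattice is modelled by a rational vector space `P` with symmetric
bilinear form `B` (the normalized invariant form), coroot pairings are
`χ(ξ^∨) = 2(χ|ξ)/(ξ|ξ)`, `V(μ)` is modelled by its family of weight spaces
`W : P → Submodule ℂ M` together with the raising operators `E i` (the actions of
the simple root vectors `e_i`), and `hKac` is Kac's bound `(μ|μ) ≥ (ν|ν)` for every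
weight `ν` of `V(μ)`. -/
theorem wahl_mu_beta_one_weight_space_vanishes
    {ι P : Type} [Fintype ι] [AddCommGroup P] [Module ℚ P]
    (B : P →ₗ[ℚ] P →ₗ[ℚ] ℚ) (hsym : ∀ x y, B x y = B y x)
    (α : ι → P) (hα : ∀ i, 0 < B (α i) (α i))
    (Φ Φpos : Set P) (hsub : Φpos ⊆ Φ)
    (lam mu beta : P) (hβ : beta ∈ Φpos) (hβreal : B beta beta ≠ 0)
    (nlam nmu : ι → ℕ)
    (hlam : ∀ i, 2 * B lam (α i) / B (α i) (α i) = nlam i)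
    (hmu : ∀ i, 2 * B mu (α i) / B (α i) (α i) = nmu i)
    (hP1 : ∀ i, 0 ≤ B (lam + mu - beta) (α i))
    (hP2 : ∀ i, (nlam i = 0 ∨ nmu i = 0) → beta - α i ∉ Φ ∧ beta - α i ≠ 0)
    (hmubeta : 2 * B mu beta / B beta beta = 1)
    {M : Type} [AddCommGroup M] [Module ℂ M]
    (W : P → Submodule ℂ M)
    (E : ι → M →ₗ[ℂ] M)
    (hE : ∀ (i : ι) (ν : P), ∀ v ∈ W ν, E i v ∈ W (ν + α i))
    (hKac : ∀ ν : P, W ν ≠ ⊥ → B ν ν ≤ B mu mu) :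
    (∀ i : ι, W (mu - beta + ((nlam i + 1 : ℕ) : ℚ) • α i) = ⊥) ∧
    (∀ i : ι, ∀ v ∈ W (mu - beta), ((E i) ^ (nlam i + 1)) v = 0) := by
  have key : ∀ i : ι, W (mu - beta + ((nlam i + 1 : ℕ) : ℚ) • α i) = ⊥ := by
    intro i
    by_contra h
    have hbd := hKac _ h
    have ha := hα i
    have hbb : 2 * B mu beta = B beta beta := by
      field_simp [hβreal] at hmubeta; linarith
    have hlami : 2 * B lam (α i) = (nlam i : ℚ) * B (α i) (α i) := by
      have h2 := hlam i
      field_simp [ha.ne'] at h2; linarith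
    have hp1 : 0 ≤ B lam (α i) + B mu (α i) - B beta (α i) := by
      have := hP1 i; simpa [map_add, map_sub] using this
    set n : ℚ := ((nlam i + 1 : ℕ) : ℚ) with hn
    have hn' : n = (nlam i : ℚ) + 1 := by push_cast [hn]; ring
    have hexp : B (mu - beta + n • α i) (mu - beta + n • α i)
        = B mu mu - 2 * B mu beta + B beta beta
          + 2 * n * (B mu (α i) - B beta (α i)) + n * n * B (α i) (α i) := by
      simp only [map_add, map_sub, map_smul, LinearMap.add_apply, LinearMap.sub_apply,
        LinearMap.smul_apply, smul_eq_mul]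
      rw [hsym beta mu, hsym (α i) mu, hsym (α i) beta]
      ring
    rw [hexp] at hbd
    have hnpos : (0:ℚ) < n := by rw [hn']; positivity
    nlinarith [mul_pos hnpos ha, mul_nonneg hnpos.le hp1]
  refine ⟨key, ?_⟩
  intro i v hv
  have mem : ∀ k : ℕ, ((E i) ^ k) v ∈ W (mu - beta + (k : ℚ) • α i) := by
    intro k
    induction k with
    | zero => simpa using hv
    | succ k ih =>
      have h1 : ((E i) ^ (k + 1)) v = E i (((E i) ^ k) v) := by
        rw [pow_succ']; rfl
      have h2 := hE i _ _ ih
      rw [h1]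
      have heq : mu - beta + ((k : ℚ)) • α i + α i
          = mu - beta + (((k + 1 : ℕ)) : ℚ) • α i := by
        push_cast; rw [add_smul, one_smul]; abel
      rwa [heq] at h2
  have := mem (nlam i + 1)
  rw [key i] at this
  simpa using this
end

section
/- Let 𝔤 be an affine Kac–Moody algebra, λ, μ dominant integral weights of levels l, m > 0, and (λ, μ, β) a Wahl triple with β a real positive root. Then (1/2)[(λ|λ+2ρ)/(l+h^∨) + (μ|μ+2ρ)/(m+h^∨) − (λ+μ−β | λ+μ−β+2ρ)/(l+m+h^∨)] > 0, assuming the Cartan-component inequality (1/2)[(λ|λ+2ρ)/(l+h^∨) + (μ|μ+2ρ)/(m+h^∨) − (λ+μ|λ+μ+2ρ)/(l+m+h^∨)] ≥ 0. -/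
/-- Let `𝔤` be an affine Kac–Moody algebra, `λ, μ` dominant
integral weights of positive levels `l, m`, and `(λ, μ, β)` a Wahl triple with `β` a
real positive root.  Then
`(1/2)[(λ|λ+2ρ)/(l+h^∨) + (μ|μ+2ρ)/(m+h^∨) − (λ+μ−β|λ+μ−β+2ρ)/(l+m+h^∨)] > 0`,
assuming the Cartan-component inequality
`(1/2)[(λ|λ+2ρ)/(l+h^∨) + (μ|μ+2ρ)/(m+h^∨) − (λ+μ|λ+μ+2ρ)/(l+m+h^∨)] ≥ 0`.

The weight space `𝔥*` is modelled by a real vector space `P` with symmetric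
bilinear form `B` (the normalized invariant form), simple roots `α i`; dominance
and the Wahl conditions (P1), (P2) are expressed through `B`-pairings; `β` being a
positive real root gives `B β β > 0` and `β` a nonnegative combination of simple
roots; and `ρ(β^∨) ≥ 1` gives `(β|β) ≤ 2(ρ|β)`. -/
theorem wahl_triple_L0_positive
    {ι P : Type} [Fintype ι] [AddCommGroup P] [Module ℝ P]
    (B : P →ₗ[ℝ] P →ₗ[ℝ] ℝ) (hsym : ∀ x y, B x y = B y x)
    (α : ι → P) (Φ : Set P)
    (lam mu beta rho : P) (l m hv : ℝ)
    (hl : 0 < l) (hm : 0 < m) (hh : 0 < hv)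
    (hβΦ : beta ∈ Φ)
    (hβpos : ∃ c : ι → ℕ, beta = ∑ i, (c i : ℝ) • α i)
    (hdomlam : ∀ i, 0 ≤ B lam (α i)) (hdommu : ∀ i, 0 ≤ B mu (α i))
    (hP1 : ∀ i, 0 ≤ B (lam + mu - beta) (α i))
    (hP2 : ∀ i, (B lam (α i) = 0 ∨ B mu (α i) = 0) → beta - α i ∉ Φ ∧ beta - α i ≠ 0)
    (hreal : 0 < B beta beta)
    (hrho : B beta beta ≤ 2 * B rho beta)
    (hCartan : 0 ≤ (1 / 2) * (B lam (lam + (2 : ℝ) • rho) / (l + hv)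
        + B mu (mu + (2 : ℝ) • rho) / (m + hv)
        - B (lam + mu) (lam + mu + (2 : ℝ) • rho) / (l + m + hv))) :
    0 < (1 / 2) * (B lam (lam + (2 : ℝ) • rho) / (l + hv)
        + B mu (mu + (2 : ℝ) • rho) / (m + hv)
        - B (lam + mu - beta) (lam + mu - beta + (2 : ℝ) • rho) / (l + m + hv)) := by

  obtain ⟨c, hc⟩ := hβpos
  -- (λ+μ-β | β) ≥ 0
  have h1 : 0 ≤ B (lam + mu - beta) beta := by
    nth_rewrite 2 [hc]
    rw [map_sum]
    apply Finset.sum_nonneg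
    intro i _
    rw [map_smul, smul_eq_mul]
    exact mul_nonneg (Nat.cast_nonneg _) (hP1 i)
  have h2 : B (lam + mu) beta = B (lam + mu - beta) beta + B beta beta := by
    simp only [map_sub, LinearMap.sub_apply]; ring
  have hνβ : 0 < B (lam + mu) beta := by
    rw [h2]; linarith
  have key : B (lam + mu - beta) (lam + mu - beta + (2 : ℝ) • rho)
      = B (lam + mu) (lam + mu + (2 : ℝ) • rho)
        - 2 * B (lam + mu) beta + B beta beta - 2 * B rho beta := by
    have e1 := hsym beta lam
    have e2 := hsym beta mu
    have e3 := hsym beta rho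
    simp only [map_add, map_sub, map_smul, LinearMap.add_apply, LinearMap.sub_apply,
      LinearMap.smul_apply, smul_eq_mul] at *
    linarith
  have hD : 0 < l + m + hv := by linarith
  have ht : 0 < 2 * B (lam + mu) beta - B beta beta + 2 * B rho beta := by linarith
  have htD : 0 < (2 * B (lam + mu) beta - B beta beta + 2 * B rho beta) / (l + m + hv) :=
    div_pos ht hD
  rw [key]
  have hsplit : (B (lam + mu) (lam + mu + (2 : ℝ) • rho)
        - 2 * B (lam + mu) beta + B beta beta - 2 * B rho beta) / (l + m + hv)
      = B (lam + mu) (lam + mu + (2 : ℝ) • rho) / (l + m + hv)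
        - (2 * B (lam + mu) beta - B beta beta + 2 * B rho beta) / (l + m + hv) := by
    field_simp
    ring
  rw [hsplit]
  linarith
end
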